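/- Let E be a real Banach space, let a < b be real numbers, and let ψ, ψ' : ℝ → E be such that ψ is Bochner integrable on [a,b], ψ' is Bochner integrable on [a,b] with t ↦ ‖ψ'(t)‖² integrable on [a,b], and for every s ∈ [a,b] one has ψ(b) − ψ(s) = ∫_s^b ψ'(t) dt. Then ‖ψ(b) − (b−a)^{-1} ∫_a^b ψ(s) ds‖² ≤ (b−a) · ∫_a^b ‖ψ'(t)‖² dt. -/

import Mathlib

open MeasureTheory intervalIntegral

/-- Squared deviation of the endpoint value from the time average is bounded by the
interval length times the squared `L²`-norm of the derivative: if
`ψ(b) − ψ(s) = ∫_s^b ψ'` for all `s ∈ [a,b]`, then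
`‖ψ(b) − (b−a)⁻¹ ∫_a^b ψ‖² ≤ (b−a) ∫_a^b ‖ψ'‖²`. -/
theorem endpoint_sub_average_sq_norm_le
    {E : Type*} [NormedAddCommGroup E] [NormedSpace ℝ E] [CompleteSpace E]
    (a b : ℝ) (hab : a < b) (ψ ψ' : ℝ → E)
    (hψ : IntervalIntegrable ψ volume a b)
    (hψ' : IntervalIntegrable ψ' volume a b)
    (hψ'sq : IntervalIntegrable (fun t => ‖ψ' t‖ ^ 2) volume a b)
    (hftc : ∀ s ∈ Set.Icc a b, ψ b - ψ s = ∫ t in s..b, ψ' t) :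
    ‖ψ b - (b - a)⁻¹ • ∫ s in a..b, ψ s‖ ^ 2 ≤ (b - a) * ∫ t in a..b, ‖ψ' t‖ ^ 2 := by
  have hba : (0:ℝ) < b - a := by linarith
  set C : ℝ := ∫ t in a..b, ‖ψ' t‖ with hC
  have hC0 : 0 ≤ C := intervalIntegral.integral_nonneg hab.le (fun t _ => norm_nonneg _)
  -- Step 1: rewrite the deviation as an average of ψ b - ψ s
  have h1 : ψ b - (b - a)⁻¹ • ∫ s in a..b, ψ s
      = (b - a)⁻¹ • ∫ s in a..b, (ψ b - ψ s) := by
    rw [intervalIntegral.integral_sub intervalIntegrable_const hψ,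
      intervalIntegral.integral_const, smul_sub, smul_smul,
      inv_mul_cancel₀ hba.ne', one_smul]
  -- integrability of s ↦ ‖ψ b - ψ s‖
  have hint : IntervalIntegrable (fun s => ‖ψ b - ψ s‖) volume a b :=
    (intervalIntegrable_const.sub hψ).norm
  -- Step 2: pointwise bound ‖ψ b - ψ s‖ ≤ C
  have h2 : ∀ s ∈ Set.Icc a b, ‖ψ b - ψ s‖ ≤ C := by
    intro s hs
    rw [hftc s hs]
    calc ‖∫ t in s..b, ψ' t‖ ≤ ∫ t in s..b, ‖ψ' t‖ :=
          intervalIntegral.norm_integral_le_integral_norm hs.2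
      _ ≤ C := by
          refine intervalIntegral.integral_mono_interval hs.1 hs.2 le_rfl ?_ hψ'.norm
          filter_upwards with t using norm_nonneg _
  have h3 : ‖ψ b - (b - a)⁻¹ • ∫ s in a..b, ψ s‖ ≤ C := by
    rw [h1, norm_smul, Real.norm_eq_abs, abs_of_pos (inv_pos.2 hba)]
    have hb1 : ‖∫ s in a..b, (ψ b - ψ s)‖ ≤ ∫ s in a..b, ‖ψ b - ψ s‖ :=
      intervalIntegral.norm_integral_le_integral_norm hab.le
    have hb2 : (∫ s in a..b, ‖ψ b - ψ s‖) ≤ ∫ _ in a..b, C :=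
      intervalIntegral.integral_mono_on hab.le hint intervalIntegrable_const h2
    rw [intervalIntegral.integral_const, smul_eq_mul] at hb2
    calc (b - a)⁻¹ * ‖∫ s in a..b, (ψ b - ψ s)‖ ≤ (b - a)⁻¹ * ((b - a) * C) := by
          exact mul_le_mul_of_nonneg_left (hb1.trans hb2) (inv_pos.2 hba).le
      _ = C := by field_simp
  -- Step 3: Cauchy–Schwarz : C^2 ≤ (b-a) * ∫ ‖ψ'‖^2
  set μ : Measure ℝ := volume.restrict (Set.Ioc a b) with hμ
  have hIoc : ∀ {g : ℝ → ℝ}, (∫ t in a..b, g t) = ∫ t, g t ∂μ := by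
    intro g; rw [intervalIntegral.integral_of_le hab.le]
  have hfin : IsFiniteMeasure μ := by
    constructor
    rw [hμ, Measure.restrict_apply_univ, Real.volume_Ioc]
    exact ENNReal.ofReal_lt_top
  have hf_mem : MemLp (fun t => ‖ψ' t‖) (ENNReal.ofReal 2) μ := by
    rw [show ENNReal.ofReal 2 = 2 by norm_num]
    refine (memLp_two_iff_integrable_sq hψ'.1.norm.aestronglyMeasurable).2 ?_
    exact hψ'sq.1
  have hg_mem : MemLp (fun _ : ℝ => (1:ℝ)) (ENNReal.ofReal 2) μ := memLp_const 1
  have hCS := MeasureTheory.integral_mul_le_Lp_mul_Lq_of_nonneg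
    (Real.holderConjugate_iff.mpr ⟨by norm_num, by norm_num⟩)
    (Filter.Eventually.of_forall fun t => norm_nonneg (ψ' t))
    (Filter.Eventually.of_forall fun _ => zero_le_one) hf_mem hg_mem
  simp only [mul_one, one_pow] at hCS
  have hsq : ∀ x : ℝ, x ^ (2:ℝ) = x ^ 2 := fun x => by
    rw [show (2:ℝ) = ((2:ℕ):ℝ) by norm_num, Real.rpow_natCast]
  simp only [hsq] at hCS
  have hI2 : (∫ t, ‖ψ' t‖ ^ 2 ∂μ) = ∫ t in a..b, ‖ψ' t‖ ^ 2 := hIoc.symm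
  have hI1 : (∫ t, (1:ℝ) ^ 2 ∂μ) = b - a := by
    simp [hμ, Real.volume_Ioc, ENNReal.toReal_ofReal hba.le, hab.le]
  have hCle : C ≤ Real.sqrt ((∫ t in a..b, ‖ψ' t‖ ^ 2) * (b - a)) := by
    rw [Real.sqrt_mul (intervalIntegral.integral_nonneg hab.le
      (fun t _ => sq_nonneg _)), Real.sqrt_eq_rpow, Real.sqrt_eq_rpow]
    calc C = ∫ t, ‖ψ' t‖ * 1 ∂μ := by rw [hC]; simp [hIoc]
      _ ≤ _ := by rw [← hI2, ← hI1] at *; simpa using hCS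
  have hfinal : C ^ 2 ≤ (∫ t in a..b, ‖ψ' t‖ ^ 2) * (b - a) := by
    have := pow_le_pow_left₀ hC0 hCle 2
    rwa [Real.sq_sqrt (mul_nonneg (intervalIntegral.integral_nonneg hab.le
      (fun t _ => sq_nonneg _)) hba.le)] at this
  calc ‖ψ b - (b - a)⁻¹ • ∫ s in a..b, ψ s‖ ^ 2 ≤ C ^ 2 :=
        pow_le_pow_left₀ (norm_nonneg _) h3 2
    _ ≤ _ := by linarith [hfinal]
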